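/- With the hypotheses of the preceding ramification bound (f monic, integral, degree d, p | d, postcritically bounded, fixes 0; a integral, avoiding the postcritical set, with fⁿ(z) − a having dⁿ distinct roots for all n), for every 0 < λ < 1 and all sufficiently large n there exist distinct α_n, β_n ∈ f⁻ⁿ(a) with λ < |α_n − β_n|_v < 1. -/

import Mathlib

open Polynomial

section Aux

variable {Ω : Type*} [Field Ω] (v : AddValuation Ω (WithTop ℝ))

private lemma vAux_nat_nonneg (n : ℕ) : 0 ≤ v (n : Ω) := by
  induction n with
  | zero => simp
  | succ k ih =>
      push_cast
      calc (0:WithTop ℝ) = min 0 0 := by simp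
      _ ≤ min (v (k:Ω)) (v 1) := by simp [ih]
      _ ≤ v ((k:Ω)+1) := v.map_add _ _

private lemma vAux_int_nonneg (n : ℤ) : 0 ≤ v (n : Ω) := by
  cases n with
  | ofNat k => simpa using vAux_nat_nonneg v k
  | negSucc k => rw [Int.cast_negSucc, v.map_neg]; exact_mod_cast vAux_nat_nonneg v (k+1)

private lemma vAux_pow_nonneg {x : Ω} (hx : 0 ≤ v x) (n : ℕ) : 0 ≤ v (x^n) := by
  rw [v.map_pow]; exact nsmul_nonneg hx n

private lemma vAux_coprime_zero {p : ℕ} (hp : p.Prime) (hvp : 0 < v (p:Ω)) {i : ℕ}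
    (hpi : ¬ p ∣ i) : v (i : Ω) = 0 := by
  refine le_antisymm ?_ (vAux_nat_nonneg v i)
  by_contra h
  push_neg at h
  have hcop : IsCoprime (i : ℤ) (p : ℤ) := by
    rw [Int.isCoprime_iff_gcd_eq_one]
    simpa [Int.gcd_natCast_natCast, Nat.coprime_comm] using (hp.coprime_iff_not_dvd.mpr hpi).symm
  obtain ⟨u, w, huw⟩ := hcop
  have h1 : v (1 : Ω) = 0 := v.map_one
  have hlt : (0:WithTop ℝ) < v ((u : Ω) * (i:Ω) + (w:Ω) * (p:Ω)) := by
    refine lt_of_lt_of_le ?_ (v.map_add _ _)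
    rw [lt_min_iff, v.map_mul, v.map_mul]
    refine ⟨?_, ?_⟩
    · exact lt_of_lt_of_le h (le_add_of_nonneg_left (vAux_int_nonneg v u))
    · exact lt_of_lt_of_le hvp (le_add_of_nonneg_left (vAux_int_nonneg v w))
  have heq : ((u : Ω) * (i:Ω) + (w:Ω) * (p:Ω)) = 1 := by
    exact_mod_cast congrArg (fun z : ℤ => (z : Ω)) huw
  rw [heq, h1] at hlt
  exact lt_irrefl _ hlt

private lemma coe_nsmul_real (n : ℕ) (r : ℝ) :
    n • ((r:ℝ) : WithTop ℝ) = (((n:ℝ)*r : ℝ) : WithTop ℝ) := by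
  norm_cast; exact nsmul_eq_mul n r

private lemma vAux_multiset_prod (m : Multiset Ω) : v m.prod = (m.map (v ·)).sum := by
  induction m using Multiset.induction with
  | empty => simp
  | cons a s ih => simp [v.map_mul, ih]

private lemma vAux_real {x : Ω} (hx : x ≠ 0) : ∃ r : ℝ, v x = (r : WithTop ℝ) :=
  Option.ne_none_iff_exists'.mp (v.ne_top_iff.mpr hx)

private lemma vAux_eval_neg {F : Polynomial Ω} {d : ℕ} (hF : F.Monic) (hFdeg : F.natDegree = d)
    (hF0 : F.coeff 0 = 0) (hFint : ∀ i, 0 ≤ v (F.coeff i))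
    {t : Ω} (ht : v t < 0) : v (F.eval t) = d • v t := by
  have htne : t ≠ 0 := by rintro rfl; simp at ht
  obtain ⟨r, hr⟩ := vAux_real v htne
  have hrneg : r < 0 := by rw [hr] at ht; exact_mod_cast ht
  have hcd : F.coeff d = 1 := hFdeg ▸ hF.coeff_natDegree
  have heval : F.eval t = (∑ i ∈ Finset.range d, F.coeff i * t ^ i) + t ^ d := by
    rw [eval_eq_sum_range, hFdeg, Finset.sum_range_succ, hcd, one_mul]
  have hvtd : v (t ^ d) = (((d:ℝ)*r : ℝ) : WithTop ℝ) := by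
    rw [v.map_pow, hr, coe_nsmul_real]
  have hsum : (((d:ℝ)*r : ℝ) : WithTop ℝ) < v (∑ i ∈ Finset.range d, F.coeff i * t ^ i) := by
    refine v.map_lt_sum WithTop.coe_ne_top ?_
    intro i hi
    rcases Nat.eq_zero_or_pos i with h0 | hpos
    · subst h0; simp only [hF0, zero_mul, v.map_zero]; exact WithTop.coe_lt_top _
    · rw [v.map_mul, v.map_pow, hr, coe_nsmul_real]
      refine lt_of_lt_of_le ?_ (le_add_of_nonneg_left (hFint i))
      rw [WithTop.coe_lt_coe]
      have hid : (i:ℝ) < d := by exact_mod_cast Finset.mem_range.mp hi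
      exact mul_lt_mul_of_neg_right hid hrneg
  rw [heval, v.map_add_eq_of_lt_right (by rw [hvtd]; exact hsum), hvtd, hr, coe_nsmul_real]

private lemma vAux_preimage_nonneg {F : Polynomial Ω} {d : ℕ} (hF : F.Monic)
    (hFdeg : F.natDegree = d) (hd2 : 2 ≤ d) (hF0 : F.coeff 0 = 0)
    (hFint : ∀ i, 0 ≤ v (F.coeff i))
    {t c : Ω} (hc : 0 ≤ v c) (h : F.eval t = c) : 0 ≤ v t := by
  by_contra hneg
  push_neg at hneg
  have htne : t ≠ 0 := by rintro rfl; simp at hneg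
  obtain ⟨r, hr⟩ := vAux_real v htne
  have hrneg : r < 0 := by rw [hr] at hneg; exact_mod_cast hneg
  have := vAux_eval_neg v hF hFdeg hF0 hFint hneg
  rw [h, hr, coe_nsmul_real] at this
  rw [this] at hc
  have h2 : (0:ℝ) ≤ (d:ℝ)*r := by exact_mod_cast hc
  nlinarith [h2, hrneg, (by exact_mod_cast hd2 : (2:ℝ) ≤ (d:ℝ)),
    mul_nonneg (by linarith [(show (2:ℝ) ≤ (d:ℝ) by exact_mod_cast hd2)] : (0:ℝ) ≤ (d:ℝ)-2)
      (by linarith : (0:ℝ) ≤ -r)]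

private lemma vAux_iterate_preimage_nonneg {F : Polynomial Ω} {d : ℕ} (hF : F.Monic)
    (hFdeg : F.natDegree = d) (hd2 : 2 ≤ d) (hF0 : F.coeff 0 = 0)
    (hFint : ∀ i, 0 ≤ v (F.coeff i))
    {b x : Ω} (hb : 0 ≤ v b) {n : ℕ}
    (h : (fun t => F.eval t)^[n] x = b) : 0 ≤ v x := by
  induction n generalizing x with
  | zero => rw [Function.iterate_zero_apply] at h; rwa [h]
  | succ k ih =>
      rw [Function.iterate_succ_apply] at h
      exact vAux_preimage_nonneg v hF hFdeg hd2 hF0 hFint (ih h) rfl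

private lemma vAux_crit_nonneg {F : Polynomial Ω} {d : ℕ} (hF : F.Monic)
    (hFdeg : F.natDegree = d) (hd2 : 2 ≤ d) (hF0 : F.coeff 0 = 0)
    (hFint : ∀ i, 0 ≤ v (F.coeff i))
    {γ : Ω} {B : ℝ}
    (hB : ∀ n : ℕ, (B : WithTop ℝ) ≤ v ((fun t => F.eval t)^[n] γ)) : 0 ≤ v γ := by
  by_contra hneg
  push_neg at hneg
  have htne : γ ≠ 0 := by rintro rfl; simp at hneg
  obtain ⟨r, hr⟩ := vAux_real v htne
  have hrneg : r < 0 := by rw [hr] at hneg; exact_mod_cast hneg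
  have key : ∀ n : ℕ, v ((fun t => F.eval t)^[n] γ) ≤ ((((n:ℝ)+1)*r : ℝ) : WithTop ℝ) := by
    intro n
    induction n with
    | zero => simp [hr]
    | succ k ih =>
        have hneg' : v ((fun t => F.eval t)^[k] γ) < 0 :=
          lt_of_le_of_lt ih (by exact_mod_cast (by nlinarith : ((k:ℝ)+1)*r < 0))
        have hne : (fun t => F.eval t)^[k] γ ≠ 0 := by
          intro h0; rw [h0] at hneg'; simp at hneg'
        obtain ⟨s, hs⟩ := vAux_real v hne
        have hsle : s ≤ ((k:ℝ)+1)*r := by rw [hs] at ih; exact_mod_cast ih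
        have hsneg : s < 0 := by rw [hs] at hneg'; exact_mod_cast hneg'
        rw [Function.iterate_succ_apply']
        rw [vAux_eval_neg v hF hFdeg hF0 hFint (by rw [hs]; exact_mod_cast hsneg), hs,
          coe_nsmul_real, WithTop.coe_le_coe]
        push_cast
        nlinarith [(by exact_mod_cast hd2 : (2:ℝ) ≤ (d:ℝ)), hsle, hsneg, hrneg,
          mul_nonneg (by linarith [(show (2:ℝ) ≤ (d:ℝ) by exact_mod_cast hd2)] : (0:ℝ) ≤ (d:ℝ)-2)
            (by linarith : (0:ℝ) ≤ -s),
          mul_nonneg (by positivity : (0:ℝ) ≤ (k:ℝ)) (by linarith : (0:ℝ) ≤ -r)]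
  obtain ⟨n, hn⟩ := exists_nat_gt (B/r)
  have h1 := le_trans (hB n) (key n)
  rw [WithTop.coe_le_coe] at h1
  have h2 : ((n:ℝ)+1)*r < (B/r)*r := mul_lt_mul_of_neg_right (by linarith) hrneg
  rw [div_mul_cancel₀ B hrneg.ne] at h2
  linarith

private lemma vAux_pow_sub_pow {x y : Ω} (hx : 0 ≤ v x) (hy : 0 ≤ v y) (i : ℕ) :
    v (x - y) ≤ v (x^i - y^i) := by
  have h := geom_sum₂_mul x y i
  rw [← h, v.map_mul]
  refine le_add_of_nonneg_of_le ?_ le_rfl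
  refine v.map_le_sum ?_
  intro j hj
  rw [v.map_mul, v.map_pow, v.map_pow]
  exact add_nonneg (nsmul_nonneg hx j) (nsmul_nonneg hy _)

private lemma vAux_frob {p : ℕ} (hp : p.Prime) {s t : Ω} (hs : 0 ≤ v s) (ht : 0 ≤ v t) :
    min (p • v (s - t)) (v (p:Ω) + v (s - t)) ≤ v (s^p - t^p) := by
  set e := s - t with he
  have hse : s = t + e := by rw [he]; ring
  have hexp : s^p - t^p = ∑ k ∈ Finset.range p, t ^ k * e ^ (p - k) * (p.choose k : Ω) := by
    rw [hse, add_pow, Finset.sum_range_succ]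
    simp
  have hve : 0 ≤ v e := v.map_le_sub hs ht
  rw [hexp]
  refine v.map_le_sum ?_
  intro k hk
  have hkp : k < p := Finset.mem_range.mp hk
  rw [v.map_mul, v.map_mul, v.map_pow, v.map_pow]
  rcases Nat.eq_zero_or_pos k with rfl | hkpos
  · refine le_trans (min_le_left _ _) ?_
    simp only [Nat.choose_zero_right, Nat.cast_one, v.map_one, add_zero,
      pow_zero, Nat.sub_zero, zero_smul, zero_add]
    exact le_rfl
  · refine le_trans (min_le_right _ _) ?_
    obtain ⟨c, hc⟩ := hp.dvd_choose_self hkpos.ne' hkp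
    have hcv : v ((p.choose k : ℕ) : Ω) = v (p:Ω) + v (c:Ω) := by
      rw [show ((p.choose k : ℕ) : Ω) = (p:Ω) * (c:Ω) by
          exact_mod_cast congrArg (Nat.cast : ℕ → Ω) hc, v.map_mul]
    have h1 : v (p:Ω) ≤ v ((p.choose k : ℕ) : Ω) := by
      rw [hcv]; exact le_add_of_nonneg_right (vAux_nat_nonneg v c)
    have h2 : v e ≤ (p-k) • v e := by
      obtain ⟨m, hm⟩ : ∃ m, p - k = m + 1 := ⟨p - k - 1, by omega⟩
      rw [hm, succ_nsmul]
      exact le_add_of_nonneg_left (nsmul_nonneg hve m)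
    calc v (p:Ω) + v e ≤ v ((p.choose k : ℕ) : Ω) + (p-k) • v e := add_le_add h1 h2
    _ ≤ k • v t + (v ((p.choose k : ℕ) : Ω) + (p-k) • v e) :=
        le_add_of_nonneg_left (nsmul_nonneg ht k)
    _ = (k • v t + (p-k) • v e) + v ((p.choose k : ℕ) : Ω) := by
        rw [add_assoc, add_comm (v ((p.choose k : ℕ) : Ω)) _, ← add_assoc]

private lemma vAux_key {p : ℕ} (hp : p.Prime) {F : Polynomial Ω}
    (hFint : ∀ i, 0 ≤ v (F.coeff i))
    (hcoeff : ∀ i, ¬ p ∣ i → v (p:Ω) ≤ v (F.coeff i))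
    {x y : Ω} (hx : 0 ≤ v x) (hy : 0 ≤ v y) :
    min (p • v (x-y)) (v (p:Ω) + v (x-y)) ≤ v (F.eval x - F.eval y) := by
  have hsplit : F.eval x - F.eval y
      = ∑ i ∈ Finset.range (F.natDegree + 1), F.coeff i * (x^i - y^i) := by
    rw [eval_eq_sum_range, eval_eq_sum_range, ← Finset.sum_sub_distrib]
    exact Finset.sum_congr rfl fun i _ => by ring
  rw [hsplit]
  refine v.map_le_sum ?_
  intro i _
  rcases Nat.eq_zero_or_pos i with rfl | hipos
  · simp
  rw [v.map_mul]
  by_cases hpi : p ∣ i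
  · obtain ⟨m, rfl⟩ := hpi
    have hm : m ≠ 0 := by rintro rfl; omega
    have hpow : x^(p*m) - y^(p*m) = (x^m)^p - (y^m)^p := by
      rw [← pow_mul, ← pow_mul, mul_comm]
    have h1 := vAux_frob v hp (vAux_pow_nonneg v hx m) (vAux_pow_nonneg v hy m)
    have h2 : v (x - y) ≤ v (x^m - y^m) := vAux_pow_sub_pow v hx hy m
    refine le_trans ?_ (le_add_of_nonneg_left (hFint (p*m)))
    rw [hpow]
    refine le_trans ?_ h1
    refine min_le_min ?_ ?_
    · exact nsmul_le_nsmul_right h2 p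
    · exact add_le_add_right h2 _
  · refine le_trans (min_le_right _ _) ?_
    exact add_le_add (hcoeff i hpi) (vAux_pow_sub_pow v hx hy i)

private lemma vAux_coeff_X_sub_C (γ : Ω) (hγ : 0 ≤ v γ) (k : ℕ) :
    0 ≤ v ((X - C γ).coeff k) := by
  match k with
  | 0 => simp only [coeff_sub, coeff_X_zero, coeff_C_zero, zero_sub, v.map_neg]; exact hγ
  | 1 => simp [coeff_sub]
  | (k+2) => simp [coeff_sub, coeff_C, coeff_X]

private lemma vAux_coeff_multiset_prod (m : Multiset Ω) (hm : ∀ γ ∈ m, 0 ≤ v γ) (j : ℕ) :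
    0 ≤ v (((m.map fun γ => X - C γ).prod).coeff j) := by
  induction m using Multiset.induction generalizing j with
  | empty => simp [coeff_one]; split <;> simp
  | cons γ s ih =>
      simp only [Multiset.map_cons, Multiset.prod_cons, coeff_mul]
      refine v.map_le_sum ?_
      intro ij hij
      rw [v.map_mul]
      exact add_nonneg (vAux_coeff_X_sub_C v γ (hm γ (Multiset.mem_cons_self γ s)) ij.1)
        (ih (fun γ' hγ' => hm γ' (Multiset.mem_cons_of_mem hγ')) ij.2)

end Aux

section AlgClosed

variable {Ω : Type*} [Field Ω] [IsAlgClosed Ω] [CharZero Ω] (v : AddValuation Ω (WithTop ℝ))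

private lemma deriv_factor {F : Polynomial Ω} {d : ℕ} (hF : F.Monic) (hFdeg : F.natDegree = d)
    (hd2 : 2 ≤ d) :
    F.derivative = C ((d:Ω)) * (F.derivative.roots.map fun γ => X - C γ).prod := by
  have hcd : F.coeff d = 1 := hFdeg ▸ hF.coeff_natDegree
  have hco : F.derivative.coeff (d-1) = (d:Ω) := by
    rw [coeff_derivative, show d - 1 + 1 = d by omega, hcd, one_mul,
      Nat.cast_sub (by omega : 1 ≤ d)]
    push_cast; ring
  have hdne : ((d:Ω)) ≠ 0 := by exact_mod_cast Nat.cast_ne_zero.mpr (by omega)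
  have hndle : F.derivative.natDegree ≤ d - 1 := hFdeg ▸ natDegree_derivative_le F
  have hndge : d - 1 ≤ F.derivative.natDegree := le_natDegree_of_ne_zero (hco ▸ hdne)
  have hlc : F.derivative.leadingCoeff = (d:Ω) := by
    rw [leadingCoeff, le_antisymm hndle hndge, hco]
  have := (IsAlgClosed.splits F.derivative).eq_prod_roots
  rwa [hlc] at this

private lemma v_deriv_coeff {F : Polynomial Ω} {d : ℕ} (hF : F.Monic) (hFdeg : F.natDegree = d)
    (hd2 : 2 ≤ d) (hcrit : ∀ γ ∈ F.derivative.roots, 0 ≤ v γ) (j : ℕ) :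
    v ((d:Ω)) ≤ v (F.derivative.coeff j) := by
  conv_rhs => rw [deriv_factor hF hFdeg hd2]
  rw [coeff_C_mul, v.map_mul]
  exact le_add_of_nonneg_right (vAux_coeff_multiset_prod v _ hcrit j)

private lemma v_coeff_of_not_dvd {p : ℕ} (hp : p.Prime) (hvp : 0 < v ((p:Ω)))
    {F : Polynomial Ω} {d : ℕ} (hF : F.Monic) (hFdeg : F.natDegree = d)
    (hd2 : 2 ≤ d) (hpd : p ∣ d) (hcrit : ∀ γ ∈ F.derivative.roots, 0 ≤ v γ)
    {i : ℕ} (hpi : ¬ p ∣ i) : v ((p:Ω)) ≤ v (F.coeff i) := by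
  have hvpd : v ((p:Ω)) ≤ v ((d:Ω)) := by
    obtain ⟨e, rfl⟩ := hpd
    push_cast
    rw [v.map_mul]
    exact le_add_of_nonneg_right (vAux_nat_nonneg v e)
  have hi1 : 1 ≤ i := by
    rcases Nat.eq_zero_or_pos i with rfl | h
    · exact absurd (dvd_zero p) hpi
    · exact h
  obtain ⟨j, rfl⟩ : ∃ j, i = j + 1 := ⟨i - 1, by omega⟩
  have h1 := v_deriv_coeff v hF hFdeg hd2 hcrit j
  rw [coeff_derivative] at h1
  have hvi : v (((j:ℕ)+1 : Ω)) = 0 := by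
    have := vAux_coprime_zero v hp hvp (i := j+1) hpi
    push_cast at this ⊢
    exact this
  rw [v.map_mul] at h1
  calc v ((p:Ω)) ≤ v ((d:Ω)) := hvpd
  _ ≤ v (F.coeff (j+1)) + v (((j:ℕ)+1:Ω)) := by exact_mod_cast h1
  _ = v (F.coeff (j+1)) := by rw [hvi, add_zero]

-- the fiber product formula
private lemma fiber_prod {F : Polynomial Ω} {d : ℕ} (hF : F.Monic) (hFdeg : F.natDegree = d)
    (hd2 : 2 ≤ d) (y' z : Ω) :
    F.eval z - y' = (((F - C y').roots).map (fun r => z - r)).prod := by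
  have hm : (F - C y').Monic := by
    rw [sub_eq_add_neg]
    refine hF.add_of_left ?_
    rw [degree_neg]
    refine lt_of_le_of_lt (degree_C_le) ?_
    rw [degree_eq_natDegree hF.ne_zero, hFdeg]
    exact_mod_cast (by omega : 0 < d)
  have hfac := (IsAlgClosed.splits _).eq_prod_roots_of_monic hm
  have : F.eval z - y' = (F - C y').eval z := by simp
  rw [this]
  conv_lhs => rw [hfac]
  rw [eval_multiset_prod, Multiset.map_map]
  congr 1
  refine Multiset.map_congr rfl ?_
  intro r hr
  simp

end AlgClosed

-- multiset helpers in WithTop ℝ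
private lemma msum_mem_le_sum {m : Multiset (WithTop ℝ)} (h : ∀ e ∈ m, 0 ≤ e) {x : WithTop ℝ}
    (hx : x ∈ m) : x ≤ m.sum := by
  obtain ⟨m', rfl⟩ := Multiset.exists_cons_of_mem hx
  rw [Multiset.sum_cons]
  refine le_add_of_nonneg_right ?_
  refine Multiset.sum_nonneg ?_
  intro e he
  exact h e (Multiset.mem_cons_of_mem he)

private lemma msum_exists_pos {m : Multiset (WithTop ℝ)} (h : ∀ e ∈ m, 0 ≤ e)
    (hs : 0 < m.sum) : ∃ e ∈ m, 0 < e := by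
  by_contra hc
  push_neg at hc
  have : m.sum = 0 := Multiset.sum_eq_zero (fun e he => le_antisymm (hc e he) (h e he))
  rw [this] at hs
  exact lt_irrefl _ hs

section Descent

variable {Ω : Type*} [Field Ω] [IsAlgClosed Ω] [CharZero Ω] (v : AddValuation Ω (WithTop ℝ))
  {p : ℕ} (hp : p.Prime) (hvp : 0 < v ((p:Ω)))
  {F : Polynomial Ω} {d : ℕ} (hF : F.Monic) (hFdeg : F.natDegree = d)
  (hd2 : 2 ≤ d) (hpd : p ∣ d) (hF0 : F.coeff 0 = 0)
  (hFint : ∀ i, 0 ≤ v (F.coeff i))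
  (hcrit : ∀ γ ∈ F.derivative.roots, 0 ≤ v γ)
  {b : Ω} (hb : 0 ≤ v b)

include hp hvp hF hFdeg hd2 hpd hF0 hFint hcrit hb in
private lemma step_lemma {m : ℕ} {x y : Ω}
    (hx : (fun t => F.eval t)^[m] x = b) (hy : (fun t => F.eval t)^[m] y = b)
    {V : ℝ} (hV : v (x - y) = (V : WithTop ℝ)) (hVpos : 0 < V)
    {Vp : ℝ} (hVp : v ((p:Ω)) = (Vp : WithTop ℝ)) :
    ∃ x' y' : Ω, (fun t => F.eval t)^[m+1] x' = b ∧ (fun t => F.eval t)^[m+1] y' = b ∧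
      ∃ V' : ℝ, v (x' - y') = (V' : WithTop ℝ) ∧ 0 < V' ∧ V' ≤ V ∧
        V' ≤ max (V/p) (V - Vp) := by
  have hvx : 0 ≤ v x := vAux_iterate_preimage_nonneg v hF hFdeg hd2 hF0 hFint hb hx
  have hvy : 0 ≤ v y := vAux_iterate_preimage_nonneg v hF hFdeg hd2 hF0 hFint hb hy
  -- choose x' with F.eval x' = x
  obtain ⟨x', hx'root⟩ := IsAlgClosed.exists_root (F - C x) (by
    rw [degree_eq_natDegree (by
      intro h0
      have := congrArg natDegree h0
      rw [natDegree_sub_C, hFdeg, natDegree_zero] at this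
      omega)]
    rw [natDegree_sub_C, hFdeg]
    exact_mod_cast (by omega : (d:ℕ) ≠ 0))
  have hx'eval : F.eval x' = x := by
    have := hx'root
    rw [IsRoot, eval_sub, eval_C, sub_eq_zero] at this
    exact this
  have hx'it : (fun t => F.eval t)^[m+1] x' = b := by
    rw [Function.iterate_succ_apply]
    simpa [hx'eval] using hx
  have hvx' : 0 ≤ v x' := vAux_preimage_nonneg v hF hFdeg hd2 hF0 hFint hvx hx'eval
  -- the fiber over y
  set R := (F - C y).roots with hR
  have hroots : ∀ r ∈ R, F.eval r = y := by
    intro r hr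
    have : (F - C y).eval r = 0 := by
      have := (mem_roots (by
        intro h0
        have := congrArg natDegree h0
        rw [natDegree_sub_C, hFdeg, natDegree_zero] at this
        omega)).mp hr
      exact this
    have h2 : eval r (F - C y) = 0 := this
    rw [eval_sub, eval_C, sub_eq_zero] at h2
    exact h2
  have hvr : ∀ r ∈ R, 0 ≤ v r := fun r hr =>
    vAux_preimage_nonneg v hF hFdeg hd2 hF0 hFint hvy (hroots r hr)
  have hsum : (V : WithTop ℝ) = ((R.map fun r => v (x' - r))).sum := by
    rw [← hV]
    have h1 : x - y = F.eval x' - y := by rw [hx'eval]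
    rw [h1, fiber_prod hF hFdeg hd2 y x', vAux_multiset_prod, Multiset.map_map]
    rfl
  have hnn : ∀ e ∈ R.map fun r => v (x' - r), 0 ≤ e := by
    intro e he
    obtain ⟨r, hr, rfl⟩ := Multiset.mem_map.mp he
    exact v.map_le_sub hvx' (hvr r hr)
  have hpos : (0 : WithTop ℝ) < ((R.map fun r => v (x' - r))).sum := by
    rw [← hsum]; exact_mod_cast hVpos
  obtain ⟨e, he, hepos⟩ := msum_exists_pos hnn hpos
  obtain ⟨r, hrR, hre⟩ := Multiset.mem_map.mp he
  have heleV : e ≤ (V : WithTop ℝ) := hsum ▸ msum_mem_le_sum hnn he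
  have hene : e ≠ ⊤ := ne_top_of_le_ne_top WithTop.coe_ne_top heleV
  obtain ⟨V', rfl⟩ := WithTop.ne_top_iff_exists.mp hene
  have hV'pos : 0 < V' := by exact_mod_cast hepos
  have hV'leV : V' ≤ V := by exact_mod_cast heleV
  have hy'it : (fun t => F.eval t)^[m+1] r = b := by
    rw [Function.iterate_succ_apply]
    simpa [hroots r hrR] using hy
  -- key inequality
  have hkey := vAux_key v hp hFint
    (fun i hpi => v_coeff_of_not_dvd v hp hvp hF hFdeg hd2 hpd hcrit hpi)
    hvx' (hvr r hrR)
  rw [hx'eval, hroots r hrR, hV, hre, hVp] at hkey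
  rw [coe_nsmul_real, ← WithTop.coe_add, ← WithTop.coe_min, WithTop.coe_le_coe] at hkey
  have hVppos : 0 < Vp := by rw [hVp] at hvp; exact_mod_cast hvp
  have hppos : (0:ℝ) < p := by exact_mod_cast hp.pos
  have hbound : V' ≤ max (V/p) (V - Vp) := by
    rcases min_le_iff.mp hkey with h | h
    · exact le_max_of_le_left ((le_div_iff₀ hppos).mpr (by linarith))
    · exact le_max_of_le_right (by linarith)
  exact ⟨x', r, hx'it, hy'it, V', hre, hV'pos, hV'leV, hbound⟩

include hp hvp hF hFdeg hd2 hpd hF0 hFint hcrit hb in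
private lemma first_pair (hsep1 : ({x : Ω | F.eval x = b}).ncard = d) :
    ∃ x y : Ω, F.eval x = b ∧ F.eval y = b ∧
      ∃ V : ℝ, v (x - y) = (V : WithTop ℝ) ∧ 0 < V := by
  classical
  have hFbm : (F - C b).Monic := by
    rw [sub_eq_add_neg]
    refine hF.add_of_left ?_
    rw [degree_neg]
    refine lt_of_le_of_lt (degree_C_le) ?_
    rw [degree_eq_natDegree hF.ne_zero, hFdeg]
    exact_mod_cast (by omega : 0 < d)
  have hFbne : F - C b ≠ 0 := hFbm.ne_zero
  set R := (F - C b).roots with hRdef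
  have hmem : ∀ x : Ω, x ∈ R ↔ F.eval x = b := by
    intro x
    rw [hRdef, mem_roots hFbne]
    constructor
    · intro h
      have h2 : eval x (F - C b) = 0 := h
      rwa [eval_sub, eval_C, sub_eq_zero] at h2
    · intro h
      have h2 : eval x (F - C b) = 0 := by rw [eval_sub, eval_C, sub_eq_zero]; exact h
      exact h2
  have hset : {x : Ω | F.eval x = b} = (R.toFinset : Set Ω) := by
    ext x
    simp [Multiset.mem_toFinset, hmem x]
  have hcardFin : R.toFinset.card = d := by
    rw [hset, Set.ncard_coe_finset] at hsep1
    exact hsep1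
  have hcardle : Multiset.card R ≤ d := by
    have := card_roots' (F - C b)
    rwa [natDegree_sub_C, hFdeg] at this
  have hnodup : R.Nodup := by
    rw [← Multiset.toFinset_card_eq_card_iff_nodup]
    refine le_antisymm (Multiset.toFinset_card_le R) ?_
    rw [hcardFin]
    exact hcardle
  have hRne : R ≠ 0 := by
    intro h0
    rw [h0] at hcardFin
    simp at hcardFin
    omega
  obtain ⟨α, hα⟩ := Multiset.exists_mem_of_ne_zero hRne
  have hαeval : F.eval α = b := (hmem α).mp hα
  have hvα : 0 ≤ v α := vAux_preimage_nonneg v hF hFdeg hd2 hF0 hFint hb hαeval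
  -- derivative at α
  set Q := ((R.erase α).map (fun r => X - C r)).prod with hQdef
  have hfac : F - C b = (X - C α) * Q := by
    have h1 := (IsAlgClosed.splits _).eq_prod_roots_of_monic hFbm
    rw [← hRdef] at h1
    rw [h1, ← Multiset.cons_erase hα, Multiset.map_cons, Multiset.prod_cons]
  have hderiv : F.derivative = derivative ((X - C α) * Q) := by
    rw [← hfac]
    simp
  have hdeval : F.derivative.eval α = Q.eval α := by
    rw [hderiv, derivative_mul]
    simp
  -- lower bound for v (F.derivative.eval α)
  have hvpd : v ((p:Ω)) ≤ v ((d:Ω)) := by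
    obtain ⟨e, rfl⟩ := hpd
    push_cast
    rw [v.map_mul]
    exact le_add_of_nonneg_right (vAux_nat_nonneg v e)
  have hlow : v ((p:Ω)) ≤ v (F.derivative.eval α) := by
    refine le_trans hvpd ?_
    conv_rhs => rw [deriv_factor hF hFdeg hd2]
    rw [eval_mul, eval_C, v.map_mul]
    refine le_add_of_nonneg_right ?_
    rw [eval_multiset_prod, Multiset.map_map, vAux_multiset_prod, Multiset.map_map]
    refine Multiset.sum_nonneg ?_
    intro e he
    obtain ⟨γ, hγ, rfl⟩ := Multiset.mem_map.mp he
    simpa using v.map_le_sub hvα (hcrit γ hγ)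
  have hQsum : v (Q.eval α) = ((R.erase α).map (fun β => v (α - β))).sum := by
    rw [hQdef, eval_multiset_prod, Multiset.map_map, vAux_multiset_prod, Multiset.map_map]
    congr 1
    refine Multiset.map_congr rfl ?_
    intro β hβ
    simp
  have hnn : ∀ e ∈ (R.erase α).map (fun β => v (α - β)), 0 ≤ e := by
    intro e he
    obtain ⟨β, hβ, rfl⟩ := Multiset.mem_map.mp he
    have hβR : β ∈ R := Multiset.mem_of_mem_erase hβ
    exact v.map_le_sub hvα
      (vAux_preimage_nonneg v hF hFdeg hd2 hF0 hFint hb ((hmem β).mp hβR))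
  have hpossum : (0 : WithTop ℝ) < ((R.erase α).map (fun β => v (α - β))).sum := by
    calc (0:WithTop ℝ) < v ((p:Ω)) := hvp
    _ ≤ v (F.derivative.eval α) := hlow
    _ = _ := by rw [hdeval, hQsum]
  obtain ⟨e, he, hepos⟩ := msum_exists_pos hnn hpossum
  obtain ⟨β, hβ, hβe⟩ := Multiset.mem_map.mp he
  have hβR : β ∈ R := Multiset.mem_of_mem_erase hβ
  have hβne : β ≠ α := by
    intro h0
    subst h0
    exact (Multiset.Nodup.notMem_erase hnodup) hβ
  have hsub : α - β ≠ 0 := sub_ne_zero.mpr (Ne.symm hβne)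
  obtain ⟨V, hV⟩ := vAux_real v hsub
  refine ⟨α, β, hαeval, (hmem β).mp hβR, V, hV, ?_⟩
  rw [← hβe, hV] at hepos
  exact_mod_cast hepos

end Descent



/-- The value group of a subset `S` of a valued field: the additive subgroup of `ℝ`
generated by the valuations of the nonzero elements of `S`. -/
noncomputable def valGroup {Ω : Type*} [Field Ω] (v : AddValuation Ω (WithTop ℝ))
    (S : Set Ω) : AddSubgroup ℝ :=
  AddSubgroup.closure {r : ℝ | ∃ x ∈ S, x ≠ 0 ∧ v x = (r : WithTop ℝ)}

/-- With the hypotheses of the ramification bound of Statement 18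
(`(K,v)` a local field of characteristic `0` and residue characteristic `p`; `f` monic of
degree `d` with integral coefficients, `p ∣ d`, postcritically bounded, fixing `0`; `a`
integral, avoiding the postcritical set, with `fⁿ(z) - a` having `dⁿ` distinct roots for
all `n`): for every `0 < λ < 1` and all sufficiently large `n` there exist distinct
`αₙ, βₙ ∈ f⁻ⁿ(a)` with `λ < |αₙ - βₙ|_v < 1`. In additive terms (`λ = e^{-ε}`): for every
`ε > 0` there is `N` such that for all `n ≥ N` there are distinct `αₙ, βₙ ∈ f⁻ⁿ(a)` with
`0 < v(αₙ - βₙ) < ε`. -/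
theorem stmt_19 {K : Type*} [Field K] [CharZero K]
    (v : AddValuation (AlgebraicClosure K) (WithTop ℝ))
    (hdisc : valGroup v (Set.range (algebraMap K (AlgebraicClosure K))) =
      AddSubgroup.zmultiples (1 : ℝ))
    (p : ℕ) (hp : p.Prime) (hvp : 0 < v ((p : AlgebraicClosure K)))
    (f : Polynomial K) (hf : f.Monic) (d : ℕ) (hdeg : f.natDegree = d)
    (hd2 : 2 ≤ d) (hpd : p ∣ d) (h0 : f.coeff 0 = 0)
    (hint : ∀ i : ℕ, 0 ≤ v (algebraMap K (AlgebraicClosure K) (f.coeff i)))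
    (hpcb : ∃ B : ℝ,
      ∀ γ ∈ ((f.map (algebraMap K (AlgebraicClosure K))).derivative).roots, ∀ n : ℕ,
        (B : WithTop ℝ) ≤ v ((fun t => Polynomial.aeval t f)^[n] γ))
    (a : K) (haint : 0 ≤ v (algebraMap K (AlgebraicClosure K) a))
    (hav : ∃ R : ℝ,
      ∀ γ ∈ ((f.map (algebraMap K (AlgebraicClosure K))).derivative).roots, ∀ n : ℕ,
        v ((fun t => Polynomial.aeval t f)^[n] γ - algebraMap K (AlgebraicClosure K) a)
          ≤ (R : WithTop ℝ))
    (hsep : ∀ n : ℕ, Set.ncard {x : AlgebraicClosure K |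
      (fun t => Polynomial.aeval t f)^[n] x = algebraMap K (AlgebraicClosure K) a} = d ^ n) :
    ∀ ε : ℝ, 0 < ε → ∃ N : ℕ, ∀ n ≥ N, ∃ x y : AlgebraicClosure K, x ≠ y ∧
      (fun t => Polynomial.aeval t f)^[n] x = algebraMap K (AlgebraicClosure K) a ∧
      (fun t => Polynomial.aeval t f)^[n] y = algebraMap K (AlgebraicClosure K) a ∧
      0 < v (x - y) ∧ v (x - y) < (ε : WithTop ℝ) := by
  intro ε hε
  haveI : CharZero (AlgebraicClosure K) :=
    charZero_of_injective_algebraMap (algebraMap K (AlgebraicClosure K)).injective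
  set F : Polynomial (AlgebraicClosure K) := f.map (algebraMap K (AlgebraicClosure K))
    with hFdef
  have hgeq : (fun t => Polynomial.aeval t f) = (fun t : AlgebraicClosure K => F.eval t) := by
    funext t
    rw [Polynomial.aeval_def, hFdef, Polynomial.eval_map]
  have hFm : F.Monic := hf.map _
  have hFdeg' : F.natDegree = d := by rw [hFdef, hf.natDegree_map, hdeg]
  have hF0' : F.coeff 0 = 0 := by rw [hFdef, coeff_map, h0, map_zero]
  have hFint' : ∀ i, 0 ≤ v (F.coeff i) := fun i => by rw [hFdef, coeff_map]; exact hint i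
  set b : AlgebraicClosure K := algebraMap K (AlgebraicClosure K) a with hbdef
  have hcrit : ∀ γ ∈ F.derivative.roots, 0 ≤ v γ := by
    obtain ⟨B, hB⟩ := hpcb
    intro γ hγ
    refine vAux_crit_nonneg v hFm hFdeg' hd2 hF0' hFint' (B := B) ?_
    intro n
    have := hB γ hγ n
    rwa [hgeq] at this
  have hpne : ((p : ℕ) : AlgebraicClosure K) ≠ 0 := Nat.cast_ne_zero.mpr hp.ne_zero
  obtain ⟨Vp, hVp⟩ := vAux_real v hpne
  have hVppos : 0 < Vp := by rw [hVp] at hvp; exact_mod_cast hvp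
  have hppos : (0:ℝ) < p := by exact_mod_cast hp.pos
  have hp2 : (2:ℝ) ≤ p := by exact_mod_cast hp.two_le
  -- the first pair
  have hsep1 : ({x : AlgebraicClosure K | F.eval x = b}).ncard = d := by
    have h1 := hsep 1
    rw [hgeq] at h1
    simpa using h1
  obtain ⟨x₀, y₀, hx₀, hy₀, V₁, hV₁, hV₁pos⟩ :=
    first_pair v hp hvp hFm hFdeg' hd2 hpd hF0' hFint' hcrit haint hsep1
  set η : ℝ := min Vp (ε*((p:ℝ)-1)/p) with hηdef
  have hηpos : 0 < η := by
    refine lt_min hVppos ?_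
    have : (0:ℝ) < (p:ℝ)-1 := by linarith
    positivity
  -- descent: find a pair somewhere with value in (0, ε)
  have QQ : ∀ k : ℕ, ∃ m : ℕ, ∃ x y : AlgebraicClosure K, ∃ V : ℝ,
      (fun t : AlgebraicClosure K => F.eval t)^[m] x = b ∧
      (fun t : AlgebraicClosure K => F.eval t)^[m] y = b ∧
      v (x - y) = (V : WithTop ℝ) ∧ 0 < V ∧ (V < ε ∨ V ≤ V₁ - k*η) := by
    intro k
    induction k with
    | zero =>
        refine ⟨1, x₀, y₀, V₁, ?_, ?_, hV₁, hV₁pos, Or.inr (by norm_num)⟩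
        · rw [Function.iterate_one]; exact hx₀
        · rw [Function.iterate_one]; exact hy₀
    | succ k ih =>
        obtain ⟨m, x, y, V, hx, hy, hV, hVpos, hd₁⟩ := ih
        rcases hd₁ with hlt | hle
        · exact ⟨m, x, y, V, hx, hy, hV, hVpos, Or.inl hlt⟩
        by_cases hlt : V < ε
        · exact ⟨m, x, y, V, hx, hy, hV, hVpos, Or.inl hlt⟩
        push_neg at hlt
        obtain ⟨x', y', hx', hy', V', hV', hV'pos, hV'leV, hV'bound⟩ :=
          step_lemma v hp hvp hFm hFdeg' hd2 hpd hF0' hFint' hcrit haint hx hy hV hVpos hVp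
        refine ⟨m+1, x', y', V', hx', hy', hV', hV'pos, Or.inr ?_⟩
        have hη1 : η ≤ Vp := min_le_left _ _
        have hη2 : η ≤ ε*((p:ℝ)-1)/p := min_le_right _ _
        have hdiv : V / p ≤ V - ε*((p:ℝ)-1)/p := by
          have h3 : V / p - (V - ε*((p:ℝ)-1)/p) = (ε - V)*((p:ℝ)-1)/p := by
            field_simp
            ring
          have h4 : (ε - V)*((p:ℝ)-1)/p ≤ 0 := by
            apply div_nonpos_of_nonpos_of_nonneg
            · apply mul_nonpos_of_nonpos_of_nonneg <;> linarith
            · linarith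
          linarith
        rcases le_max_iff.mp hV'bound with h | h
        · push_cast
          linarith
        · push_cast
          linarith
  obtain ⟨k, hk⟩ := exists_nat_gt ((V₁ - ε)/η)
  obtain ⟨m, x, y, V, hx, hy, hV, hVpos, hd₁⟩ := QQ k
  have hVlt : V < ε := by
    rcases hd₁ with h | h
    · exact h
    · have : (V₁ - ε)/η * η < k * η := mul_lt_mul_of_pos_right hk hηpos
      rw [div_mul_cancel₀ _ hηpos.ne'] at this
      linarith
  -- propagation
  have prop : ∀ n : ℕ, m ≤ n → ∃ x' y' : AlgebraicClosure K, ∃ V' : ℝ,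
      (fun t : AlgebraicClosure K => F.eval t)^[n] x' = b ∧
      (fun t : AlgebraicClosure K => F.eval t)^[n] y' = b ∧
      v (x' - y') = (V' : WithTop ℝ) ∧ 0 < V' ∧ V' ≤ V := by
    intro n hn
    induction n, hn using Nat.le_induction with
    | base => exact ⟨x, y, V, hx, hy, hV, hVpos, le_rfl⟩
    | succ n hn ih =>
        obtain ⟨x', y', V', hx', hy', hV', hV'pos, hV'le⟩ := ih
        obtain ⟨x'', y'', hx'', hy'', V'', hV'', hV''pos, hV''le, _⟩ :=
          step_lemma v hp hvp hFm hFdeg' hd2 hpd hF0' hFint' hcrit haint hx' hy' hV' hV'pos hVp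
        exact ⟨x'', y'', V'', hx'', hy'', hV'', hV''pos, le_trans hV''le hV'le⟩
  refine ⟨m, ?_⟩
  intro n hn
  obtain ⟨x', y', V', hx', hy', hV', hV'pos, hV'le⟩ := prop n hn
  have hne : x' ≠ y' := by
    intro h0
    rw [h0, sub_self, v.map_zero] at hV'
    exact (WithTop.top_ne_coe (α := ℝ)) hV'
  refine ⟨x', y', hne, ?_, ?_, ?_, ?_⟩
  · rw [hgeq]; exact hx'
  · rw [hgeq]; exact hy'
  · rw [hV']; exact_mod_cast hV'pos
  · rw [hV']
    exact_mod_cast lt_of_le_of_lt hV'le hVlt
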